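/- arXiv:2506.05951 — 2 statements merged into one kernel-verified Lean document; each statement's English description precedes it below -/
import Mathlib

section
/- Let T be an operator mapping sets to sets that is monotone (E ⊆ F implies TE ⊆ TF) and translation invariant (T(E+z) = TE + z for all z ∈ ℝ^N). Define the induced operator on functions by (Tu)(x) = sup{s ∈ ℝ : x ∈ T{u ≥ s}}. If u is uniformly continuous with modulus of continuity ω, then Tu is uniformly continuous with the same modulus ω. -/
/-- If T is a monotone, translation-invariant set operator and
(Tu)(x) = sup{s : x ∈ T{u ≥ s}}, then Tu has the same modulus of continuity ω as u. -/
theorem stmt_10 (N : ℕ)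
    (T : Set (EuclideanSpace ℝ (Fin N)) → Set (EuclideanSpace ℝ (Fin N)))
    (hmono : ∀ E F, E ⊆ F → T E ⊆ T F)
    (htrans : ∀ (E : Set (EuclideanSpace ℝ (Fin N))) (z : EuclideanSpace ℝ (Fin N)),
      T ((· + z) '' E) = (· + z) '' (T E))
    (u : EuclideanSpace ℝ (Fin N) → ℝ)
    (ω : ℝ → ℝ) (hωc : Continuous ω) (hωm : StrictMono ω) (hω0 : ω 0 = 0)
    (hu : ∀ x y, |u x - u y| ≤ ω (dist x y))
    (hne : ∀ x, {s : ℝ | x ∈ T {y | s ≤ u y}}.Nonempty)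
    (hbdd : ∀ x, BddAbove {s : ℝ | x ∈ T {y | s ≤ u y}})
    (Tu : EuclideanSpace ℝ (Fin N) → ℝ)
    (hTu : ∀ x, Tu x = sSup {s : ℝ | x ∈ T {y | s ≤ u y}}) :
    ∀ x y, |Tu x - Tu y| ≤ ω (dist x y) := by
  have key : ∀ x y, Tu x ≤ Tu y + ω (dist x y) := by
    intro x y
    set z := y - x with hz
    have hx : ∀ s ∈ {s : ℝ | x ∈ T {p | s ≤ u p}},
        s - ω (dist x y) ∈ {s : ℝ | y ∈ T {p | s ≤ u p}} := by
      intro s hs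
      have h1 : y ∈ (· + z) '' (T {p | s ≤ u p}) := ⟨x, hs, by simp [hz]⟩
      rw [← htrans] at h1
      refine hmono _ _ ?_ h1
      rintro _ ⟨p, hp, rfl⟩
      simp only [Set.mem_setOf_eq] at hp ⊢
      have h2 := hu (p + z) p
      have hd : dist (p + z) p = dist x y := by
        rw [dist_eq_norm, dist_eq_norm]
        simp [hz, norm_sub_rev]
      rw [hd] at h2
      have := abs_le.mp h2
      linarith [this.2]
    rw [hTu x, hTu y]
    refine csSup_le (hne x) fun s hs => ?_
    have := le_csSup (hbdd y) (hx s hs)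
    linarith
  intro x y
  rw [abs_sub_le_iff]
  constructor
  · linarith [key x y]
  · have := key y x
    rw [dist_comm y x] at this
    linarith
end

section
/- Let (E_n) be a non-decreasing sequence of measurable sets in ℝ^N contained in a fixed ball B_R, with E_n ↑ E' := ∪_n E_n in L¹, let J be lower semicontinuous with respect to L¹_loc convergence, and let (g_n) be measurable functions with |g_n| ≤ |g̃| and g_n → g̃ pointwise, where g̃ is measurable, nonnegative outside a fixed set and nonpositive inside. If each E_n minimizes F ↦ J(F) + ∫_{E△F}|g_n| − c|F| (over all measurable F, for fixed E and constant c), then E' minimizes F ↦ J(F) + ∫_{E△F}|g̃| − c|F|, provided ∫_{E△E₀}|g̃| < ∞ for some minimizer E₀ of the limit functional containing all the E_n. -/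
open MeasureTheory

/-- Superadditivity of `liminf` in `ℝ≥0∞`. -/
lemma liminf_add_liminf_le_liminf_add' {u v : ℕ → ENNReal} :
    Filter.liminf u Filter.atTop + Filter.liminf v Filter.atTop ≤
      Filter.liminf (fun n => u n + v n) Filter.atTop := by
  rw [Filter.liminf_eq_iSup_iInf_of_nat, Filter.liminf_eq_iSup_iInf_of_nat,
    Filter.liminf_eq_iSup_iInf_of_nat,
    ENNReal.iSup_add_iSup_of_monotone
      (fun i j hij => le_iInf₂ fun m hm => iInf₂_le m (hij.trans hm))
      (fun i j hij => le_iInf₂ fun m hm => iInf₂_le m (hij.trans hm))]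
  exact iSup_mono fun n => le_iInf₂ fun m hm =>
    add_le_add (iInf₂_le m hm) (iInf₂_le m hm)

/-- Coercion `ℝ≥0∞ → EReal` of a finite value equals coercion of its `toReal`. -/
lemma coe_toReal_ereal_eq {x : ENNReal} (hx : x ≠ ⊤) :
    ((x.toReal : ℝ) : EReal) = (x : EReal) := by
  rw [← EReal.toReal_coe_ennreal]
  exact EReal.coe_toReal (by simpa [EReal.coe_ennreal_eq_top_iff]) (EReal.coe_ennreal_ne_bot x)

/-- Stability of minimizers for the truncated functionals: if
E_n ↑ E' ⊆ B_R, each E_n minimizes F ↦ J(F) + ∫_{E△F}|g_n| − c|F| with |g_n| ≤ |g̃|,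
g_n → g̃ pointwise, g̃ ≥ 0 off E and ≤ 0 on E, J is L¹_loc-lower semicontinuous, and
some minimizer E₀ of the limit functional contains all E_n with ∫_{E△E₀}|g̃| < ∞,
then E' minimizes F ↦ J(F) + ∫_{E△F}|g̃| − c|F|. -/
theorem stmt_18 (N : ℕ) (R : ℝ) (hR : 0 < R)
    (J : Set (EuclideanSpace ℝ (Fin N)) → ENNReal)
    (hlsc : ∀ (F : ℕ → Set (EuclideanSpace ℝ (Fin N))) (G : Set (EuclideanSpace ℝ (Fin N))),
      (∀ K : Set (EuclideanSpace ℝ (Fin N)), IsCompact K →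
        Filter.Tendsto (fun n => volume (symmDiff (F n) G ∩ K)) Filter.atTop (nhds 0)) →
      J G ≤ Filter.liminf (fun n => J (F n)) Filter.atTop)
    (E : Set (EuclideanSpace ℝ (Fin N))) (hEm : MeasurableSet E)
    (hEb : Bornology.IsBounded E) (c : ℝ)
    (gt : EuclideanSpace ℝ (Fin N) → ℝ) (hgtm : Measurable gt)
    (hsign_in : ∀ x ∈ E, gt x ≤ 0) (hsign_out : ∀ x ∉ E, 0 ≤ gt x)
    (gn : ℕ → EuclideanSpace ℝ (Fin N) → ℝ) (hgnm : ∀ n, Measurable (gn n))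
    (hdom : ∀ n x, |gn n x| ≤ |gt x|)
    (hptw : ∀ x, Filter.Tendsto (fun n => gn n x) Filter.atTop (nhds (gt x)))
    (Φ : (EuclideanSpace ℝ (Fin N) → ℝ) → Set (EuclideanSpace ℝ (Fin N)) → EReal)
    (hΦ : ∀ gi F, Φ gi F = (J F : EReal) +
      ((∫⁻ x in symmDiff E F, ENNReal.ofReal |gi x| : ENNReal) : EReal) -
      (c : EReal) * ((volume F : ENNReal) : EReal))
    (En : ℕ → Set (EuclideanSpace ℝ (Fin N))) (hEnm : ∀ n, MeasurableSet (En n))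
    (hEnmono : Monotone En)
    (hEnball : ∀ n, En n ⊆ Metric.ball (0 : EuclideanSpace ℝ (Fin N)) R)
    (hEnmin : ∀ n, ∀ F, MeasurableSet F → Φ (gn n) (En n) ≤ Φ (gn n) F)
    (E' : Set (EuclideanSpace ℝ (Fin N))) (hE' : E' = ⋃ n, En n)
    (E₀ : Set (EuclideanSpace ℝ (Fin N))) (hE₀m : MeasurableSet E₀)
    (hE₀min : ∀ F, MeasurableSet F → Φ gt E₀ ≤ Φ gt F)
    (hE₀sup : ∀ n, En n ⊆ E₀)
    (hE₀fin : (∫⁻ x in symmDiff E E₀, ENNReal.ofReal |gt x| : ENNReal) ≠ ⊤) :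
    ∀ F, MeasurableSet F → Φ gt E' ≤ Φ gt F := by
  intro F hF
  -- basic facts
  have hE'm : MeasurableSet E' := hE' ▸ MeasurableSet.iUnion hEnm
  have hsub : ∀ n, En n ⊆ E' := fun n => hE' ▸ Set.subset_iUnion En n
  have hE'ball : E' ⊆ Metric.ball (0 : EuclideanSpace ℝ (Fin N)) R :=
    hE' ▸ Set.iUnion_subset hEnball
  have hballfin : volume (Metric.ball (0 : EuclideanSpace ℝ (Fin N)) R) ≠ ⊤ :=
    measure_ball_lt_top.ne
  have hvE' : volume E' ≠ ⊤ := fun h =>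
    hballfin (top_le_iff.mp (h ▸ measure_mono hE'ball))
  have hvEn : ∀ n, volume (En n) ≠ ⊤ := fun n h =>
    hballfin (top_le_iff.mp (h ▸ measure_mono (hEnball n)))
  -- notation
  set I : (EuclideanSpace ℝ (Fin N) → ℝ) → Set (EuclideanSpace ℝ (Fin N)) → ENNReal :=
    fun g S => ∫⁻ x in symmDiff E S, ENNReal.ofReal |g x| with hI
  set A : ℕ → ENNReal := fun n => J (En n) + I (gn n) (En n) with hA
  set A' : ENNReal := J E' + I gt E' with hA'
  -- rewriting Φ for finite-volume sets
  have hΦ' : ∀ g S, volume S ≠ ⊤ → Φ g S =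
      ((J S + I g S : ENNReal) : EReal) - ((c * (volume S).toReal : ℝ) : EReal) := by
    intro g S hS
    rw [hΦ, EReal.coe_ennreal_add]
    congr 1
    rw [← coe_toReal_ereal_eq hS, ← EReal.coe_mul]
  -- Step 1: J E' ≤ liminf J (En n)
  have hJ : J E' ≤ Filter.liminf (fun n => J (En n)) Filter.atTop := by
    apply hlsc En E'
    intro K _
    have hdiff : Filter.Tendsto (fun n => volume (E' \ En n)) Filter.atTop (nhds 0) := by
      have h0 : Filter.Tendsto (volume ∘ fun n => E' \ En n) Filter.atTop
          (nhds (volume (⋂ n, E' \ En n))) := by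
        apply tendsto_measure_iInter_atTop
          (fun n => (hE'm.diff (hEnm n)).nullMeasurableSet)
          (fun i j hij => Set.diff_subset_diff_right (hEnmono hij))
        exact ⟨0, fun h => hvE' (top_le_iff.mp (h ▸ measure_mono Set.diff_subset))⟩
      have : (⋂ n, E' \ En n) = ∅ := by
        rw [← Set.diff_iUnion, ← hE', Set.diff_self]
      rwa [this, measure_empty] at h0
    refine tendsto_of_tendsto_of_tendsto_of_le_of_le tendsto_const_nhds hdiff
      (fun n => zero_le) (fun n => ?_)
    rw [symmDiff_of_le (hsub n)]
    exact measure_mono Set.inter_subset_left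
  -- Step 2 (Fatou): I gt E' ≤ liminf I (gn n) (En n)
  have hFatou : I gt E' ≤ Filter.liminf (fun n => I (gn n) (En n)) Filter.atTop := by
    set f : ℕ → EuclideanSpace ℝ (Fin N) → ENNReal :=
      fun n => (symmDiff E (En n)).indicator fun x => ENNReal.ofReal |gn n x| with hf
    set g : EuclideanSpace ℝ (Fin N) → ENNReal :=
      (symmDiff E E').indicator fun x => ENNReal.ofReal |gt x| with hg
    have hmem : ∀ x, ∀ᶠ n in Filter.atTop,
        (x ∈ symmDiff E (En n) ↔ x ∈ symmDiff E E') := by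
      intro x
      have h : ∀ᶠ n in Filter.atTop, (x ∈ En n ↔ x ∈ E') := by
        by_cases hx : x ∈ E'
        · obtain ⟨m, hm⟩ := Set.mem_iUnion.1 (hE' ▸ hx)
          exact Filter.eventually_atTop.2 ⟨m, fun n hn => iff_of_true (hEnmono hn hm) hx⟩
        · exact Filter.Eventually.of_forall fun n =>
            iff_of_false (fun h => hx (hsub n h)) hx
      exact h.mono fun n hn => by simp [Set.mem_symmDiff, hn]
    have htendsto : ∀ x, Filter.Tendsto (fun n => f n x) Filter.atTop (nhds (g x)) := by
      intro x
      by_cases hx : x ∈ symmDiff E E'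
      · have heq : (fun n => ENNReal.ofReal |gn n x|) =ᶠ[Filter.atTop] fun n => f n x :=
          (hmem x).mono fun n hn => (Set.indicator_of_mem (hn.2 hx) (fun x => ENNReal.ofReal |gn n x|)).symm
        rw [hg, Set.indicator_of_mem hx]
        exact Filter.Tendsto.congr' heq
          ((ENNReal.continuous_ofReal.tendsto _).comp ((hptw x).abs))
      · have heq : (fun _ : ℕ => (0 : ENNReal)) =ᶠ[Filter.atTop] fun n => f n x :=
          (hmem x).mono fun n hn =>
            (Set.indicator_of_notMem (fun h => hx (hn.1 h)) (fun x => ENNReal.ofReal |gn n x|)).symm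
        rw [hg, Set.indicator_of_notMem hx]
        exact Filter.Tendsto.congr' heq tendsto_const_nhds
    have hfm : ∀ n, Measurable (f n) := fun n =>
      ((hgnm n).abs.ennreal_ofReal).indicator (hEm.symmDiff (hEnm n))
    calc I gt E' = ∫⁻ x, g x := (lintegral_indicator (hEm.symmDiff hE'm) _).symm
      _ = ∫⁻ x, Filter.liminf (fun n => f n x) Filter.atTop := by
          refine lintegral_congr fun x => ((htendsto x).liminf_eq).symm
      _ ≤ Filter.liminf (fun n => ∫⁻ x, f n x) Filter.atTop := lintegral_liminf_le hfm
      _ = Filter.liminf (fun n => I (gn n) (En n)) Filter.atTop := by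
          refine Filter.liminf_congr (Filter.Eventually.of_forall fun n => ?_)
          exact lintegral_indicator (hEm.symmDiff (hEnm n)) _
  -- Step 3: A' ≤ liminf A
  have hAliminf : A' ≤ Filter.liminf A Filter.atTop :=
    le_trans (add_le_add hJ hFatou) liminf_add_liminf_le_liminf_add'
  -- Step 4: bound Φ (gn n) E₀ ≤ Φ gt E₀ and use minimality of En n
  have hbound : ∀ n, ((A n : ENNReal) : EReal) ≤
      Φ gt E₀ + ((c * (volume (En n)).toReal : ℝ) : EReal) := by
    intro n
    have h1 : Φ (gn n) (En n) ≤ Φ (gn n) E₀ := hEnmin n E₀ hE₀m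
    have h2 : Φ (gn n) E₀ ≤ Φ gt E₀ := by
      rw [hΦ, hΦ]
      refine EReal.sub_le_sub (add_le_add_right ?_ _) le_rfl
      exact EReal.coe_ennreal_le_coe_ennreal_iff.2
        (lintegral_mono fun x => ENNReal.ofReal_le_ofReal (hdom n x))
    have h3 : ((A n : ENNReal) : EReal) - ((c * (volume (En n)).toReal : ℝ) : EReal)
        ≤ Φ gt E₀ := by
      rw [← hΦ' (gn n) (En n) (hvEn n)]
      exact h1.trans h2
    exact (EReal.sub_le_iff_le_add (Or.inl (EReal.coe_ne_bot _))
      (Or.inl (EReal.coe_ne_top _))).1 h3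
  -- Step 5: pass to liminf in EReal
  have hcoe_liminf : ((Filter.liminf A Filter.atTop : ENNReal) : EReal) =
      Filter.liminf (fun n => ((A n : ENNReal) : EReal)) Filter.atTop :=
    EReal.coe_ennreal_strictMono.monotone.map_liminf_of_continuousAt A
      (continuous_coe_ennreal_ereal.continuousAt)
  have hA'le : ((A' : ENNReal) : EReal) ≤
      Filter.liminf (fun n => Φ gt E₀ + ((c * (volume (En n)).toReal : ℝ) : EReal))
        Filter.atTop := by
    calc ((A' : ENNReal) : EReal) ≤ ((Filter.liminf A Filter.atTop : ENNReal) : EReal) :=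
          EReal.coe_ennreal_le_coe_ennreal_iff.2 hAliminf
      _ = Filter.liminf (fun n => ((A n : ENNReal) : EReal)) Filter.atTop := hcoe_liminf
      _ ≤ _ := Filter.liminf_le_liminf (Filter.Eventually.of_forall hbound)
  -- volume convergence
  have hvol : Filter.Tendsto (fun n => volume (En n)) Filter.atTop (nhds (volume E')) := by
    rw [hE']
    exact tendsto_measure_iUnion_atTop hEnmono
  have hvolR : Filter.Tendsto (fun n => (volume (En n)).toReal) Filter.atTop
      (nhds ((volume E').toReal)) :=
    (ENNReal.tendsto_toReal hvE').comp hvol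
  -- case analysis on Φ gt E₀
  by_cases hQtop : Φ gt E₀ = ⊤
  · exact le_trans le_top (hQtop ▸ hE₀min F hF)
  by_cases hQbot : Φ gt E₀ = ⊥
  · exfalso
    have h0 := hbound 0
    rw [hQbot, EReal.bot_add] at h0
    exact EReal.coe_ennreal_ne_bot _ (le_bot_iff.1 h0)
  -- finite case
  set q : ℝ := (Φ gt E₀).toReal with hq
  have hQ : ((q : ℝ) : EReal) = Φ gt E₀ := EReal.coe_toReal hQtop hQbot
  have hlim : Filter.Tendsto
      (fun n => ((q + c * (volume (En n)).toReal : ℝ) : EReal)) Filter.atTop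
      (nhds ((q + c * (volume E').toReal : ℝ) : EReal)) :=
    (continuous_coe_real_ereal.tendsto _).comp
      (tendsto_const_nhds.add (hvolR.const_mul c))
  have hliminf_eq : Filter.liminf
      (fun n => Φ gt E₀ + ((c * (volume (En n)).toReal : ℝ) : EReal)) Filter.atTop
      = ((q + c * (volume E').toReal : ℝ) : EReal) := by
    have : (fun n => Φ gt E₀ + ((c * (volume (En n)).toReal : ℝ) : EReal)) =
        fun n => ((q + c * (volume (En n)).toReal : ℝ) : EReal) := by
      funext n
      rw [← hQ, ← EReal.coe_add]
    rw [this]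
    exact hlim.liminf_eq
  have hfinal : ((A' : ENNReal) : EReal) ≤ ((q + c * (volume E').toReal : ℝ) : EReal) :=
    hliminf_eq ▸ hA'le
  -- conclude
  have hE'val : Φ gt E' = ((A' : ENNReal) : EReal) -
      ((c * (volume E').toReal : ℝ) : EReal) := hΦ' gt E' hvE'
  calc Φ gt E' ≤ ((q : ℝ) : EReal) := by
        rw [hE'val]
        have := EReal.sub_le_sub hfinal
          (le_refl ((c * (volume E').toReal : ℝ) : EReal))
        refine this.trans (le_of_eq ?_)
        rw [← EReal.coe_sub]
        norm_num
    _ = Φ gt E₀ := hQ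
    _ ≤ Φ gt F := hE₀min F hF
end
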